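/- arXiv:math/0210322 — 2 statements merged into one kernel-verified Lean document; each statement's English description precedes it below -/
import Mathlib

section
/- Let Υ be a path connection on G satisfying the reparametrization law. Then for all paths λ, λ̄ in X with λ(1) = λ̄(0), writing λ∘λ̄ for the concatenation ((λ∘λ̄)(t) = λ(2t) for t ≤ 1/2, λ̄(2t−1) for t ≥ 1/2), one has Υ^{λ∘λ̄}(1) = Υ^{λ̄}(1) · Υ^λ(1). Moreover, for every path λ, writing λ⁻¹ for the reversed path λ⁻¹(t) = λ(1−t), one has Υ^{λ⁻¹}(1) = (Υ^λ(1))⁻¹ in the groupoid G. -/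
/-!
STATEMENT 2: `Υ^{λ∘λ̄}(1) = Υ^{λ̄}(1) · Υ^λ(1)` and `Υ^{λ⁻¹}(1) = (Υ^λ(1))⁻¹`.


-/

open CategoryTheory

noncomputable section

structure IntervalDiffeo (t₀ t₁ : unitInterval) : Type where
  toFun : ℝ → ℝ
  smooth : ContDiff ℝ (⊤ : ℕ∞) toFun
  bijOn : Set.BijOn toFun (Set.Icc (0 : ℝ) 1) (Set.Icc (t₀ : ℝ) (t₁ : ℝ))
  deriv_ne : ∀ t ∈ Set.Icc (0 : ℝ) 1, deriv toFun t ≠ 0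

def IntervalDiffeo.restrict {t₀ t₁ : unitInterval} (ψ : IntervalDiffeo t₀ t₁)
    (t : unitInterval) : unitInterval :=
  ⟨ψ.toFun t, le_trans t₀.2.1 (ψ.bijOn.mapsTo t.2).1, le_trans (ψ.bijOn.mapsTo t.2).2 t₁.2.2⟩

def IntervalDiffeo.reparam {X : Type*} [TopologicalSpace X] {t₀ t₁ : unitInterval}
    (ψ : IntervalDiffeo t₀ t₁) (lam : C(unitInterval, X)) : C(unitInterval, X) :=
  ⟨fun t => lam (ψ.restrict t),
    lam.continuous.comp ((ψ.smooth.continuous.comp continuous_subtype_val).subtype_mk _)⟩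

def PathConnection (X : Type*) [TopologicalSpace X] [Groupoid X] :=
  ∀ (lam : C(unitInterval, X)) (t : unitInterval), lam 0 ⟶ lam t

def ReparamLaw {X : Type*} [TopologicalSpace X] [Groupoid X] (Υ : PathConnection X) : Prop :=
  ∀ (lam : C(unitInterval, X)) (t₀ t₁ : unitInterval), t₀ < t₁ →
    ∀ (ψ : IntervalDiffeo t₀ t₁) (t : unitInterval),
      Υ lam (ψ.restrict t) = Υ lam (ψ.restrict 0) ≫ Υ (ψ.reparam lam) t

/-- A continuous map `[0,1] → X` viewed as a `Path` from `λ(0)` to `λ(1)`. -/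
def pathOf {X : Type*} [TopologicalSpace X] (lam : C(unitInterval, X)) : Path (lam 0) (lam 1) :=
  ⟨lam, rfl, rfl⟩

/-- The concatenation `λ ∘ λ̄` of two paths with `λ(1) = λ̄(0)`:
`(λ ∘ λ̄)(t) = λ(2t)` for `t ≤ 1/2` and `(λ ∘ λ̄)(t) = λ̄(2t−1)` for `t ≥ 1/2`. -/
def concatCM {X : Type*} [TopologicalSpace X] (lam mu : C(unitInterval, X))
    (h : lam 1 = mu 0) : C(unitInterval, X) :=
  ((pathOf lam).trans ((pathOf mu).cast h rfl)).toContinuousMap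

/-- `2t`, for `t ≤ 1/2`, as an element of `[0,1]`. -/
def lhalf (t : unitInterval) (ht : (t : ℝ) ≤ 1 / 2) : unitInterval :=
  ⟨2 * (t : ℝ), mul_nonneg (by norm_num) t.2.1, by linarith⟩

/-- `2t - 1`, for `t ≥ 1/2`, as an element of `[0,1]`. -/
def rhalf (t : unitInterval) (ht : 1 / 2 ≤ (t : ℝ)) : unitInterval :=
  ⟨2 * (t : ℝ) - 1, by linarith, by linarith [t.2.2]⟩

theorem concatCM_zero {X : Type*} [TopologicalSpace X] (lam mu : C(unitInterval, X))
    (h : lam 1 = mu 0) : concatCM lam mu h 0 = lam 0 :=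
  ((pathOf lam).trans ((pathOf mu).cast h rfl)).source

theorem concatCM_left {X : Type*} [TopologicalSpace X] (lam mu : C(unitInterval, X))
    (h : lam 1 = mu 0) (t : unitInterval) (ht : (t : ℝ) ≤ 1 / 2) :
    concatCM lam mu h t = lam (lhalf t ht) := by
  show ((pathOf lam).trans ((pathOf mu).cast h rfl)) t = _
  rw [Path.trans_apply, dif_pos ht]
  rfl

theorem concatCM_right {X : Type*} [TopologicalSpace X] (lam mu : C(unitInterval, X))
    (h : lam 1 = mu 0) (t : unitInterval) (ht : 1 / 2 ≤ (t : ℝ)) :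
    concatCM lam mu h t = mu (rhalf t ht) := by
  show ((pathOf lam).trans ((pathOf mu).cast h rfl)) t = _
  rw [Path.trans_apply]
  by_cases h' : (t : ℝ) ≤ 1 / 2
  · rw [dif_pos h']
    have h12 : (t : ℝ) = 1 / 2 := le_antisymm h' ht
    have e1 : lam 1 = mu (rhalf t ht) := by
      rw [h]
      congr 1
      exact Subtype.ext (by simp [rhalf, h12])
    refine Eq.trans ?_ e1
    show lam _ = lam 1
    congr 1
    exact Subtype.ext (by simp [h12])
  · rw [dif_neg h']
    rfl

/-- **Statement 1** (transport law). -/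

theorem concatCM_one {X : Type*} [TopologicalSpace X] (lam mu : C(unitInterval, X))
    (h : lam 1 = mu 0) : concatCM lam mu h 1 = mu 1 :=
  ((pathOf lam).trans ((pathOf mu).cast h rfl)).target

/-- The reversed path `λ⁻¹(t) = λ(1 - t)`. -/
def revCM {X : Type*} [TopologicalSpace X] (lam : C(unitInterval, X)) : C(unitInterval, X) :=
  ⟨fun t => lam (unitInterval.symm t), lam.continuous.comp unitInterval.continuous_symm⟩

theorem revCM_zero {X : Type*} [TopologicalSpace X] (lam : C(unitInterval, X)) :
    revCM lam 0 = lam 1 := by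
  show lam (unitInterval.symm 0) = lam 1
  rw [unitInterval.symm_zero]

theorem revCM_one {X : Type*} [TopologicalSpace X] (lam : C(unitInterval, X)) :
    revCM lam 1 = lam 0 := by
  show lam (unitInterval.symm 1) = lam 0
  rw [unitInterval.symm_one]


/-! ### Auxiliary lemmas -/

lemma bijOn_aff' {a b : ℝ} (ha : 0 < a) :
    Set.BijOn (fun t : ℝ => a * t + b) (Set.Icc 0 1) (Set.Icc b (a + b)) :=
  ⟨fun t ht => ⟨show b ≤ a * t + b by nlinarith [ht.1], show a * t + b ≤ a + b by nlinarith [ht.2]⟩,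
    fun x _ y _ hxy => mul_left_cancel₀ ha.ne' (by dsimp at hxy; linarith),
    fun y hy => ⟨(y - b) / a, ⟨div_nonneg (by linarith [hy.1]) ha.le,
      (div_le_one ha).2 (by linarith [hy.2])⟩, by field_simp; ring⟩⟩

lemma bijOn_rev' : Set.BijOn (fun t : ℝ => -1 * t + 1) (Set.Icc (0:ℝ) 1) (Set.Icc (0:ℝ) 1) :=
  ⟨fun t ht => ⟨show (0:ℝ) ≤ -1 * t + 1 by linarith [ht.2], show -1 * t + 1 ≤ 1 by linarith [ht.1]⟩,
   fun x _ y _ h => by dsimp at h; linarith,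
   fun y hy => ⟨1 - y, ⟨by linarith [hy.2], by linarith [hy.1]⟩, by dsimp; ring⟩⟩

/-- An affine interval diffeomorphism. -/
def affDiffeo (t₀ t₁ : unitInterval) (a b : ℝ) (ha : a ≠ 0)
    (hbij : Set.BijOn (fun t : ℝ => a * t + b) (Set.Icc 0 1) (Set.Icc (t₀:ℝ) (t₁:ℝ))) :
    IntervalDiffeo t₀ t₁ where
  toFun t := a * t + b
  smooth := (contDiff_const.mul contDiff_id).add contDiff_const
  bijOn := hbij
  deriv_ne t _ := by
    have hd : HasDerivAt (fun t : ℝ => a * t + b) a t := by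
      simpa using ((hasDerivAt_id t).const_mul a).add_const b
    rw [hd.deriv]; exact ha

def uHalf : unitInterval := ⟨1/2, by norm_num⟩

def psi1 : IntervalDiffeo 0 uHalf :=
  affDiffeo 0 uHalf (1/2) 0 (by norm_num)
    (by simpa [uHalf] using bijOn_aff' (a := 1/2) (b := 0) (by norm_num))

def psi2 : IntervalDiffeo uHalf 1 :=
  affDiffeo uHalf 1 (1/2) (1/2) (by norm_num)
    (by simpa [uHalf, show (2:ℝ)⁻¹ + 2⁻¹ = 1 by norm_num]
      using bijOn_aff' (a := 1/2) (b := 1/2) (by norm_num))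

def psiId : IntervalDiffeo 0 1 :=
  affDiffeo 0 1 1 0 one_ne_zero (by simpa using bijOn_aff' (a := 1) (b := 0) one_pos)

def psiRev : IntervalDiffeo 0 1 :=
  affDiffeo 0 1 (-1) 1 (by norm_num) (by simpa using bijOn_rev')

lemma uHalf_pos : (0 : unitInterval) < uHalf := by
  rw [← Subtype.coe_lt_coe]; norm_num [uHalf]

lemma uHalf_lt_one : uHalf < 1 := by
  rw [← Subtype.coe_lt_coe]; norm_num [uHalf]

lemma uZero_lt_one : (0 : unitInterval) < 1 := by
  rw [← Subtype.coe_lt_coe]; norm_num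

lemma psi1_r0 : psi1.restrict 0 = 0 :=
  Subtype.ext (by norm_num [psi1, affDiffeo, IntervalDiffeo.restrict])
lemma psi1_r1 : psi1.restrict 1 = uHalf :=
  Subtype.ext (by norm_num [psi1, affDiffeo, IntervalDiffeo.restrict, uHalf])
lemma psi2_r0 : psi2.restrict 0 = uHalf :=
  Subtype.ext (by norm_num [psi2, affDiffeo, IntervalDiffeo.restrict, uHalf])
lemma psi2_r1 : psi2.restrict 1 = 1 :=
  Subtype.ext (by norm_num [psi2, affDiffeo, IntervalDiffeo.restrict])
lemma psiId_r0 : psiId.restrict 0 = 0 :=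
  Subtype.ext (by norm_num [psiId, affDiffeo, IntervalDiffeo.restrict])
lemma psiRev_r0 : psiRev.restrict 0 = 1 :=
  Subtype.ext (by norm_num [psiRev, affDiffeo, IntervalDiffeo.restrict])
lemma psiRev_r1 : psiRev.restrict 1 = 0 :=
  Subtype.ext (by norm_num [psiRev, affDiffeo, IntervalDiffeo.restrict])

lemma Y_map_congr {X : Type*} [TopologicalSpace X] [Groupoid X] (Υ : PathConnection X)
    {f g : C(unitInterval, X)} (hfg : f = g) (t : unitInterval) :
    Υ f t = eqToHom (by rw [hfg]) ≫ Υ g t ≫ eqToHom (by rw [hfg]) := by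
  subst hfg; simp

lemma Y_idx_congr {X : Type*} [TopologicalSpace X] [Groupoid X] (Υ : PathConnection X)
    (f : C(unitInterval, X)) {s t : unitInterval} (h : s = t) :
    Υ f s = Υ f t ≫ eqToHom (by rw [h]) := by
  subst h; simp

lemma psiId_reparam {X : Type*} [TopologicalSpace X] (f : C(unitInterval, X)) :
    psiId.reparam f = f :=
  ContinuousMap.ext fun t => congrArg f (Subtype.ext
    (show (1:ℝ) * (t:ℝ) + 0 = (t:ℝ) by ring))

lemma Y_zero {X : Type*} [TopologicalSpace X] [Groupoid X] (Υ : PathConnection X)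
    (hΥ : ReparamLaw Υ) (f : C(unitInterval, X)) : Υ f 0 = 𝟙 (f 0) := by
  have key := hΥ f 0 1 uZero_lt_one psiId 0
  rw [Y_map_congr Υ (psiId_reparam f) 0] at key
  have key2 : Υ f (psiId.restrict 0) ≫ 𝟙 _ =
      Υ f (psiId.restrict 0) ≫ (eqToHom (congrArg f psiId_r0) ≫ Υ f 0 ≫
        eqToHom (congrArg f psiId_r0).symm) := by
    rw [Category.comp_id]; exact key
  have key3 := ((cancel_epi (Υ f (psiId.restrict 0))).1 key2).symm
  rw [eqToHom_comp_iff, comp_eqToHom_iff] at key3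
  rw [key3]; simp

/-- `Υ^{λ∘λ̄}(1) = Υ^{λ̄}(1) · Υ^λ(1)`, and for every path `λ`,
`Υ^{λ⁻¹}(1) = (Υ^λ(1))⁻¹` in the groupoid. -/
theorem transport_one_and_inv {X : Type*} [TopologicalSpace X] [Groupoid X]
    (Υ : PathConnection X) (hΥ : ReparamLaw Υ) :
    (∀ (lam mu : C(unitInterval, X)) (h : lam 1 = mu 0),
      Υ (concatCM lam mu h) 1 =
        eqToHom (concatCM_zero lam mu h) ≫ Υ lam 1 ≫ eqToHom h ≫
          Υ mu 1 ≫ eqToHom (concatCM_one lam mu h).symm) ∧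
    (∀ lam : C(unitInterval, X),
      Υ (revCM lam) 1 =
        eqToHom (revCM_zero lam) ≫ Groupoid.inv (Υ lam 1) ≫
          eqToHom (revCM_one lam).symm) := by
  constructor
  · intro lam mu h
    have hrep1 : psi1.reparam (concatCM lam mu h) = lam := by
      ext t
      have ht : ((psi1.restrict t : unitInterval) : ℝ) ≤ 1 / 2 := by
        have := t.2.2
        show (1/2 : ℝ) * (t:ℝ) + 0 ≤ 1/2
        linarith
      show concatCM lam mu h (psi1.restrict t) = lam t
      rw [concatCM_left lam mu h _ ht]
      exact congrArg lam (Subtype.ext (show 2 * ((1/2:ℝ) * (t:ℝ) + 0) = (t:ℝ) by ring))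
    have hrep2 : psi2.reparam (concatCM lam mu h) = mu := by
      ext t
      have ht : 1 / 2 ≤ ((psi2.restrict t : unitInterval) : ℝ) := by
        have := t.2.1
        show (1/2 : ℝ) ≤ (1/2 : ℝ) * (t:ℝ) + 1/2
        linarith
      show concatCM lam mu h (psi2.restrict t) = mu t
      rw [concatCM_right lam mu h _ ht]
      exact congrArg mu (Subtype.ext (show 2 * ((1/2:ℝ) * (t:ℝ) + 1/2) - 1 = (t:ℝ) by ring))
    have key1 := hΥ (concatCM lam mu h) 0 uHalf uHalf_pos psi1 1
    have key2 := hΥ (concatCM lam mu h) uHalf 1 uHalf_lt_one psi2 1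
    have hmid : psi2.restrict 0 = psi1.restrict 1 := psi2_r0.trans psi1_r1.symm
    rw [Y_idx_congr Υ (concatCM lam mu h) psi2_r1.symm, key2,
      Y_map_congr Υ hrep2 1, Y_idx_congr Υ (concatCM lam mu h) hmid, key1,
      Y_map_congr Υ hrep1 1, Y_idx_congr Υ (concatCM lam mu h) psi1_r0,
      Y_zero Υ hΥ (concatCM lam mu h)]
    erw [Category.id_comp]
    erw [Category.assoc, Category.assoc, Category.assoc, Category.assoc, Category.assoc, Category.assoc,
      Category.assoc]
    erw [eqToHom_trans_assoc, eqToHom_trans_assoc, eqToHom_trans_assoc, eqToHom_trans]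
  · intro lam
    have hrep : psiRev.reparam lam = revCM lam := by
      ext t
      show lam (psiRev.restrict t) = lam (unitInterval.symm t)
      exact congrArg lam (Subtype.ext (show (-1:ℝ) * (t:ℝ) + 1 = 1 - (t:ℝ) by ring))
    have key := hΥ lam 0 1 uZero_lt_one psiRev 1
    rw [Y_idx_congr Υ lam psiRev_r1, Y_zero Υ hΥ lam,
      Y_map_congr Υ hrep 1, Y_idx_congr Υ lam psiRev_r0] at key
    have key2 : Υ lam 1 ≫ (eqToHom (revCM_zero lam).symm ≫ Υ (revCM lam) 1 ≫
        eqToHom (ContinuousMap.congr_fun hrep 1).symm) =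
        eqToHom (congrArg lam psiRev_r1.symm) := by
      erw [Category.id_comp, Category.assoc, eqToHom_trans_assoc] at key; exact key.symm
    replace key2 := (IsIso.eq_inv_comp _).2 key2
    rw [eqToHom_comp_iff, comp_eqToHom_iff] at key2
    rw [Groupoid.inv_eq_inv, key2]
    erw [Category.assoc, Category.assoc (inv (Υ lam 1)) (eqToHom _) (eqToHom _), eqToHom_trans]


end
end

section
/- Rank-n homotopy is an equivalence relation on the set of smooth n-loops in X based at *: it is reflexive, symmetric, and transitive. -/
/-!
STATEMENT 8: rank-n (thin) homotopy is an equivalence relation on smooth n-loops.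
-/

open scoped Manifold
open Topology Filter

noncomputable section

/-- A smooth `n`-loop in a manifold `X` based at `x₀`: a map `[0,1]ⁿ → X` which is smooth
in the sense that it extends to a `C^∞` map on an open neighbourhood of the cube, and which
equals `x₀` whenever some coordinate lies in `[0,ε) ∪ (1-ε,1]`. -/
structure SmoothNLoop {E HM : Type*} [NormedAddCommGroup E] [NormedSpace ℝ E]
    [TopologicalSpace HM] (IM : ModelWithCorners ℝ E HM)
    (X : Type*) [TopologicalSpace X] [ChartedSpace HM X] (n : ℕ) (x₀ : X) : Type _ where
  toFun : (Fin n → ℝ) → X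
  smooth : ∃ U : Set (Fin n → ℝ), IsOpen U ∧ Set.Icc 0 1 ⊆ U ∧
      ContMDiffOn 𝓘(ℝ, Fin n → ℝ) IM (⊤ : ℕ∞) toFun U
  based : ∃ ε : ℝ, 0 < ε ∧ ∀ t ∈ Set.Icc (0 : Fin n → ℝ) 1,
      (∃ i, t i < ε ∨ 1 - ε < t i) → toFun t = x₀

/-- Rank-`n` (thin) homotopy of smooth `n`-loops: a homotopy `K : [0,1] × [0,1]ⁿ → X`,
smooth on an open neighbourhood of its domain, which is based (condition 1), starts at `ℓ₁`
(condition 2), ends at `ℓ₂` (condition 3), and whose total differential has rank `≤ n`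
throughout its domain (condition 4). -/
def ThinHomotopic {E HM : Type*} [NormedAddCommGroup E] [NormedSpace ℝ E]
    [TopologicalSpace HM] {IM : ModelWithCorners ℝ E HM}
    {X : Type*} [TopologicalSpace X] [ChartedSpace HM X] {n : ℕ} {x₀ : X}
    (ℓ₁ ℓ₂ : SmoothNLoop IM X n x₀) : Prop :=
  ∃ (K : ℝ × (Fin n → ℝ) → X) (ε : ℝ), 0 < ε ∧
    (∃ U : Set (ℝ × (Fin n → ℝ)), IsOpen U ∧
        Set.Icc (0 : ℝ) 1 ×ˢ Set.Icc (0 : Fin n → ℝ) 1 ⊆ U ∧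
        ContMDiffOn 𝓘(ℝ, ℝ × (Fin n → ℝ)) IM (⊤ : ℕ∞) K U) ∧
    (∀ s ∈ Set.Icc (0 : ℝ) 1, ∀ t ∈ Set.Icc (0 : Fin n → ℝ) 1,
        (∃ i, t i < ε ∨ 1 - ε < t i) → K (s, t) = x₀) ∧
    (∀ s ∈ Set.Icc (0 : ℝ) 1, ∀ t ∈ Set.Icc (0 : Fin n → ℝ) 1,
        s < ε → K (s, t) = ℓ₁.toFun t) ∧
    (∀ s ∈ Set.Icc (0 : ℝ) 1, ∀ t ∈ Set.Icc (0 : Fin n → ℝ) 1,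
        1 - ε < s → K (s, t) = ℓ₂.toFun t) ∧
    (∀ p ∈ Set.Icc (0 : ℝ) 1 ×ˢ Set.Icc (0 : Fin n → ℝ) 1,
        LinearMap.rank (mfderiv 𝓘(ℝ, ℝ × (Fin n → ℝ)) IM K p).toLinearMap ≤ (n : Cardinal))

section Aux

variable {E HM : Type*} [NormedAddCommGroup E] [NormedSpace ℝ E]
    [TopologicalSpace HM] {IM : ModelWithCorners ℝ E HM}
    {X : Type*} [TopologicalSpace X] [ChartedSpace HM X] [IsManifold IM (⊤ : ℕ∞) X]
    {n : ℕ} {x₀ : X}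

/-- rank bound for a linear map factoring through `Fin n → ℝ`. -/
lemma auxRankSnd {E' : Type*} [AddCommGroup E'] [Module ℝ E']
    (f : (Fin n → ℝ) →ₗ[ℝ] E') (g : (ℝ × (Fin n → ℝ)) →ₗ[ℝ] (Fin n → ℝ)) :
    LinearMap.rank (f.comp g) ≤ (n : Cardinal) := by
  have h1 := LinearMap.lift_rank_comp_le_right g f
  have h2 : LinearMap.rank g ≤ (n : Cardinal) := by
    refine (LinearMap.rank_le_range g).trans ?_
    rw [rank_fun']
    simp
  have h3 := h1.trans (Cardinal.lift_le.mpr h2)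
  simpa using h3

lemma thin_refl (a : SmoothNLoop IM X n x₀) : ThinHomotopic a a := by
  obtain ⟨Ua, hUao, hUas, hUasm⟩ := a.smooth
  obtain ⟨ε, hε, hbased⟩ := a.based
  refine ⟨fun p => a.toFun p.2, ε, hε,
    ⟨Set.univ ×ˢ Ua, isOpen_univ.prod hUao, fun p hp => ⟨trivial, hUas hp.2⟩, ?_⟩,
    fun s hs t ht h => hbased t ht h, fun s hs t ht h => rfl, fun s hs t ht h => rfl, ?_⟩
  · exact hUasm.comp (contDiff_snd.contMDiff.contMDiffOn) (fun p hp => hp.2)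
  · intro p hp
    have hd1 : MDifferentiableAt 𝓘(ℝ, Fin n → ℝ) IM a.toFun p.2 :=
      (hUasm.contMDiffAt (hUao.mem_nhds (hUas hp.2))).mdifferentiableAt (by simp)
    have hd2 : MDifferentiableAt 𝓘(ℝ, ℝ × (Fin n → ℝ)) 𝓘(ℝ, Fin n → ℝ)
        (Prod.snd : ℝ × (Fin n → ℝ) → Fin n → ℝ) p :=
      (contDiff_snd.contMDiff.contMDiffAt).mdifferentiableAt one_ne_zero
    have hc : mfderiv 𝓘(ℝ, ℝ × (Fin n → ℝ)) IM (fun p : ℝ × (Fin n → ℝ) => a.toFun p.2) p =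
        (mfderiv 𝓘(ℝ, Fin n → ℝ) IM a.toFun p.2).comp
          (mfderiv 𝓘(ℝ, ℝ × (Fin n → ℝ)) 𝓘(ℝ, Fin n → ℝ) Prod.snd p) :=
      mfderiv_comp p hd1 hd2
    rw [hc, ContinuousLinearMap.toLinearMap_comp]
    exact auxRankSnd _ _

lemma thin_symm (a b : SmoothNLoop IM X n x₀) (h : ThinHomotopic a b) : ThinHomotopic b a := by
  obtain ⟨K, ε, hε, ⟨U, hUo, hUs, hUsm⟩, h1, h2, h3, h4⟩ := h
  set σ : ℝ × (Fin n → ℝ) → ℝ × (Fin n → ℝ) := fun p => (1 - p.1, p.2) with hσdef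
  have hσc : ContDiff ℝ (⊤ : ℕ∞) σ := (contDiff_const.sub contDiff_fst).prodMk contDiff_snd
  have hσmem : ∀ p : ℝ × (Fin n → ℝ), p ∈ Set.Icc (0:ℝ) 1 ×ˢ Set.Icc (0:Fin n → ℝ) 1 →
      σ p ∈ Set.Icc (0:ℝ) 1 ×ˢ Set.Icc (0:Fin n → ℝ) 1 := by
    rintro ⟨s, t⟩ ⟨⟨hs0, hs1⟩, ht⟩
    exact ⟨⟨by show (0:ℝ) ≤ 1 - s; linarith, by show 1 - s ≤ (1:ℝ); linarith⟩, ht⟩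
  refine ⟨K ∘ σ, ε, hε, ⟨σ ⁻¹' U, hUo.preimage hσc.continuous,
      fun p hp => Set.mem_preimage.2 (hUs (hσmem p hp)), ?_⟩, ?_, ?_, ?_, ?_⟩
  · exact hUsm.comp (hσc.contMDiff.contMDiffOn) (fun p hp => hp)
  · rintro s hs t ht hb
    exact h1 (1 - s) ⟨by simpa using hs.2, by simpa using hs.1⟩ t ht hb
  · rintro s hs t ht hlt
    exact h3 (1 - s) ⟨by simpa using hs.2, by simpa using hs.1⟩ t ht (by linarith)
  · rintro s hs t ht hlt
    exact h2 (1 - s) ⟨by simpa using hs.2, by simpa using hs.1⟩ t ht (by linarith)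
  · intro p hp
    have hKd : MDifferentiableAt 𝓘(ℝ, ℝ × (Fin n → ℝ)) IM K (σ p) :=
      (hUsm.contMDiffAt (hUo.mem_nhds (hUs (hσmem p hp)))).mdifferentiableAt (by simp)
    have hσd : MDifferentiableAt 𝓘(ℝ, ℝ × (Fin n → ℝ)) 𝓘(ℝ, ℝ × (Fin n → ℝ)) σ p :=
      (hσc.contMDiff.contMDiffAt).mdifferentiableAt (by simp)
    rw [mfderiv_comp p hKd hσd, ContinuousLinearMap.toLinearMap_comp]
    exact (LinearMap.rank_comp_le_left _ _).trans (h4 (σ p) (hσmem p hp))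

set_option maxHeartbeats 1000000 in
lemma thin_trans (a b c : SmoothNLoop IM X n x₀)
    (hab : ThinHomotopic a b) (hbc : ThinHomotopic b c) : ThinHomotopic a c := by
  obtain ⟨K₁, ε₁, hε₁, ⟨U₁, hU₁o, hU₁s, hU₁sm⟩, h₁based, h₁start, h₁end, h₁rank⟩ := hab
  obtain ⟨K₂, ε₂, hε₂, ⟨U₂, hU₂o, hU₂s, hU₂sm⟩, h₂based, h₂start, h₂end, h₂rank⟩ := hbc
  obtain ⟨Ub, hUbo, hUbs, hUbsm⟩ := b.smooth
  obtain ⟨εa, hεa, haP⟩ := a.based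
  obtain ⟨εc, hεc, hcP⟩ := c.based
  set m : ℝ := min (min εa εc) (min ε₁ ε₂) with hmdef
  have hm0 : 0 < m := lt_min (lt_min hεa hεc) (lt_min hε₁ hε₂)
  set δ : ℝ := min (1/8) (m / 2) with hδdef
  have hδ0 : 0 < δ := lt_min (by norm_num) (by positivity)
  have hδ8 : δ ≤ 1/8 := min_le_left _ _
  have hδm : δ ≤ m / 2 := min_le_right _ _
  have hδa : δ < εa := by
    have : m ≤ εa := le_trans (min_le_left _ _) (min_le_left _ _); linarith
  have hδc : δ < εc := by
    have : m ≤ εc := le_trans (min_le_left _ _) (min_le_right _ _); linarith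
  have hδ1 : δ < ε₁ := by
    have : m ≤ ε₁ := le_trans (min_le_right _ _) (min_le_left _ _); linarith
  have hδ2 : δ < ε₂ := by
    have : m ≤ ε₂ := le_trans (min_le_right _ _) (min_le_right _ _); linarith
  -- the clamping function γ
  set γ : ℝ → ℝ := fun u => u + (δ - u) * (1 - Real.smoothTransition ((2*u - δ)/δ))
      + (1 - δ - u) * Real.smoothTransition ((2*u - 2*(1-δ))/δ) with hγdef
  have hψ0 : ∀ x : ℝ, 0 ≤ Real.smoothTransition x := Real.smoothTransition.nonneg
  have hψ1 : ∀ x : ℝ, Real.smoothTransition x ≤ 1 := Real.smoothTransition.le_one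
  have hA0 : ∀ u : ℝ, u ≤ δ/2 → Real.smoothTransition ((2*u - δ)/δ) = 0 := fun u h =>
    Real.smoothTransition.zero_of_nonpos (div_nonpos_of_nonpos_of_nonneg (by linarith) hδ0.le)
  have hA1 : ∀ u : ℝ, δ ≤ u → Real.smoothTransition ((2*u - δ)/δ) = 1 := fun u h =>
    Real.smoothTransition.one_of_one_le ((one_le_div hδ0).2 (by linarith))
  have hB0 : ∀ u : ℝ, u ≤ 1 - δ → Real.smoothTransition ((2*u - 2*(1-δ))/δ) = 0 := fun u h =>
    Real.smoothTransition.zero_of_nonpos (div_nonpos_of_nonpos_of_nonneg (by linarith) hδ0.le)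
  have hB1 : ∀ u : ℝ, 1 - δ/2 ≤ u → Real.smoothTransition ((2*u - 2*(1-δ))/δ) = 1 := fun u h =>
    Real.smoothTransition.one_of_one_le ((one_le_div hδ0).2 (by linarith))
  have hγe : ∀ u : ℝ, γ u = u + (δ - u) * (1 - Real.smoothTransition ((2*u - δ)/δ))
      + (1 - δ - u) * Real.smoothTransition ((2*u - 2*(1-δ))/δ) := fun u => rfl
  have hγ_id : ∀ u : ℝ, δ ≤ u → u ≤ 1 - δ → γ u = u := by
    intro u h1 h2
    rw [hγe, hA1 u h1, hB0 u h2]; ring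
  have hγ_low : ∀ u : ℝ, u < δ → γ u ≤ δ := by
    intro u h
    rw [hγe, hB0 u (by linarith)]
    have h1 := hψ0 ((2*u - δ)/δ)
    nlinarith [mul_nonneg (by linarith : (0:ℝ) ≤ δ - u) h1]
  have hγ_high : ∀ u : ℝ, 1 - δ < u → 1 - δ ≤ γ u := by
    intro u h
    rw [hγe, hA1 u (by linarith)]
    have h1 := hψ1 ((2*u - 2*(1-δ))/δ)
    nlinarith [mul_nonneg (by linarith : (0:ℝ) ≤ u - (1 - δ)) (by linarith : (0:ℝ) ≤ 1 - Real.smoothTransition ((2*u - 2*(1-δ))/δ))]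
  have hγ_mem : ∀ u : ℝ, 0 ≤ γ u ∧ γ u ≤ 1 := by
    intro u
    rcases le_or_gt u (δ/2) with h | h
    · rw [hγe, hA0 u h, hB0 u (by linarith)]
      constructor <;> nlinarith
    · rcases le_or_gt u (1 - δ) with h2 | h2
      · rw [hγe, hB0 u h2]
        have h1 := hψ0 ((2*u - δ)/δ); have h3 := hψ1 ((2*u - δ)/δ)
        constructor
        · nlinarith [mul_nonneg (by linarith : (0:ℝ) ≤ u) h1,
            mul_nonneg hδ0.le (by linarith : (0:ℝ) ≤ 1 - Real.smoothTransition ((2*u - δ)/δ))]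
        · nlinarith [mul_nonneg (by linarith : (0:ℝ) ≤ 1 - u) h1,
            mul_nonneg (by linarith : (0:ℝ) ≤ 1 - δ) (by linarith : (0:ℝ) ≤ 1 - Real.smoothTransition ((2*u - δ)/δ))]
      · rcases le_or_gt u 1 with h3 | h3
        · rw [hγe, hA1 u (by linarith)]
          have h1 := hψ0 ((2*u - 2*(1-δ))/δ); have h4 := hψ1 ((2*u - 2*(1-δ))/δ)
          constructor
          · nlinarith [mul_nonneg (by linarith : (0:ℝ) ≤ u) (by linarith : (0:ℝ) ≤ 1 - Real.smoothTransition ((2*u - 2*(1-δ))/δ)),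
              mul_nonneg (by linarith : (0:ℝ) ≤ 1 - δ) h1]
          · nlinarith [mul_nonneg (by linarith : (0:ℝ) ≤ 1 - u) (by linarith : (0:ℝ) ≤ 1 - Real.smoothTransition ((2*u - 2*(1-δ))/δ)),
              mul_nonneg hδ0.le h1]
        · rw [hγe, hA1 u (by linarith), hB1 u (by linarith)]
          constructor <;> nlinarith
  have hγc : ContDiff ℝ (⊤ : ℕ∞) γ := by
    have hψc : ContDiff ℝ (⊤ : ℕ∞) Real.smoothTransition := Real.smoothTransition.contDiff
    have hi1 : ContDiff ℝ (⊤ : ℕ∞) (fun u : ℝ => (2*u - δ)/δ) :=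
      ((contDiff_const.mul contDiff_id).sub contDiff_const).div_const _
    have hi2 : ContDiff ℝ (⊤ : ℕ∞) (fun u : ℝ => (2*u - 2*(1-δ))/δ) :=
      ((contDiff_const.mul contDiff_id).sub contDiff_const).div_const _
    exact (contDiff_id.add ((contDiff_const.sub contDiff_id).mul
        (contDiff_const.sub (hψc.comp hi1)))).add
      ((contDiff_const.sub contDiff_id).mul (hψc.comp hi2))
  -- the clamping on the cube
  set q : (Fin n → ℝ) → (Fin n → ℝ) := fun t i => γ (t i) with hqdef
  have hqc : ContDiff ℝ (⊤ : ℕ∞) q := by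
    rw [contDiff_pi]
    intro i
    exact hγc.comp ((ContinuousLinearMap.proj i : ((Fin n → ℝ)) →L[ℝ] ℝ).contDiff)
  have hqcube : ∀ t : Fin n → ℝ, q t ∈ Set.Icc (0 : Fin n → ℝ) 1 := by
    intro t
    refine Set.mem_Icc.2 ⟨?_, ?_⟩ <;> rw [Pi.le_def] <;> intro i
    · exact (hγ_mem (t i)).1
    · exact (hγ_mem (t i)).2
  -- reparametrisations in s
  set φ₁ : ℝ → ℝ := fun s => Real.smoothTransition (4*s - 1/2) with hφ₁def
  set φ₂ : ℝ → ℝ := fun s => Real.smoothTransition (4*s - 5/2) with hφ₂def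
  have hφ₁c : ContDiff ℝ (⊤ : ℕ∞) φ₁ := Real.smoothTransition.contDiff.comp (by fun_prop)
  have hφ₂c : ContDiff ℝ (⊤ : ℕ∞) φ₂ := Real.smoothTransition.contDiff.comp (by fun_prop)
  have hφ₁0 : ∀ s : ℝ, s ≤ 1/8 → φ₁ s = 0 := fun s h =>
    Real.smoothTransition.zero_of_nonpos (by linarith)
  have hφ₁1 : ∀ s : ℝ, 3/8 ≤ s → φ₁ s = 1 := fun s h =>
    Real.smoothTransition.one_of_one_le (by linarith)
  have hφ₂0 : ∀ s : ℝ, s ≤ 5/8 → φ₂ s = 0 := fun s h =>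
    Real.smoothTransition.zero_of_nonpos (by linarith)
  have hφ₂1 : ∀ s : ℝ, 7/8 ≤ s → φ₂ s = 1 := fun s h =>
    Real.smoothTransition.one_of_one_le (by linarith)
  have hφ₁mem : ∀ s : ℝ, φ₁ s ∈ Set.Icc (0:ℝ) 1 := fun s => ⟨hψ0 _, hψ1 _⟩
  have hφ₂mem : ∀ s : ℝ, φ₂ s ∈ Set.Icc (0:ℝ) 1 := fun s => ⟨hψ0 _, hψ1 _⟩
  set g₁ : ℝ × (Fin n → ℝ) → ℝ × (Fin n → ℝ) := fun p => (φ₁ p.1, q p.2) with hg₁def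
  set g₂ : ℝ × (Fin n → ℝ) → ℝ × (Fin n → ℝ) := fun p => (φ₂ p.1, q p.2) with hg₂def
  have hg₁c : ContDiff ℝ (⊤ : ℕ∞) g₁ := (hφ₁c.comp contDiff_fst).prodMk (hqc.comp contDiff_snd)
  have hg₂c : ContDiff ℝ (⊤ : ℕ∞) g₂ := (hφ₂c.comp contDiff_fst).prodMk (hqc.comp contDiff_snd)
  have hg₁mem : ∀ p : ℝ × (Fin n → ℝ),
      g₁ p ∈ Set.Icc (0:ℝ) 1 ×ˢ Set.Icc (0 : Fin n → ℝ) 1 := fun p =>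
    ⟨hφ₁mem p.1, hqcube p.2⟩
  have hg₂mem : ∀ p : ℝ × (Fin n → ℝ),
      g₂ p ∈ Set.Icc (0:ℝ) 1 ×ˢ Set.Icc (0 : Fin n → ℝ) 1 := fun p =>
    ⟨hφ₂mem p.1, hqcube p.2⟩
  -- the glued homotopy
  set K : ℝ × (Fin n → ℝ) → X := fun p => if p.1 ≤ 1/2 then K₁ (g₁ p) else K₂ (g₂ p) with hKdef
  have hKe1 : ∀ p : ℝ × (Fin n → ℝ), p.1 ≤ 1/2 → K p = K₁ (g₁ p) := fun p h => if_pos h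
  have hKe2 : ∀ p : ℝ × (Fin n → ℝ), ¬ (p.1 ≤ 1/2) → K p = K₂ (g₂ p) := fun p h => if_neg h
  have hKmid : ∀ p : ℝ × (Fin n → ℝ), 3/8 < p.1 → p.1 < 5/8 →
      K p = (b.toFun ∘ fun p' : ℝ × (Fin n → ℝ) => q p'.2) p := by
    intro p h3 h5
    by_cases h : p.1 ≤ 1/2
    · rw [hKe1 p h]
      have eg : g₁ p = ((1:ℝ), q p.2) := by
        show (φ₁ p.1, q p.2) = _
        rw [hφ₁1 p.1 (by linarith)]
      rw [eg]
      exact h₁end 1 ⟨zero_le_one, le_refl 1⟩ (q p.2) (hqcube p.2) (by linarith)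
    · rw [hKe2 p h]
      have eg : g₂ p = ((0:ℝ), q p.2) := by
        show (φ₂ p.1, q p.2) = _
        rw [hφ₂0 p.1 (by linarith)]
      rw [eg]
      exact h₂start 0 ⟨le_refl 0, zero_le_one⟩ (q p.2) (hqcube p.2) hε₂
  -- the open set on which K is smooth
  set V₁ : Set (ℝ × (Fin n → ℝ)) := {p | p.1 < 1/2} ∩ (g₁ ⁻¹' U₁) with hV₁def
  set V₂ : Set (ℝ × (Fin n → ℝ)) := {p | 1/2 < p.1} ∩ (g₂ ⁻¹' U₂) with hV₂def
  set Vm : Set (ℝ × (Fin n → ℝ)) :=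
    ({p | 3/8 < p.1} ∩ {p | p.1 < 5/8}) ∩ ((fun p : ℝ × (Fin n → ℝ) => q p.2) ⁻¹' Ub) with hVmdef
  have hV₁o : IsOpen V₁ :=
    (isOpen_lt continuous_fst continuous_const).inter (hU₁o.preimage hg₁c.continuous)
  have hV₂o : IsOpen V₂ :=
    (isOpen_lt continuous_const continuous_fst).inter (hU₂o.preimage hg₂c.continuous)
  have hVmo : IsOpen Vm :=
    ((isOpen_lt continuous_const continuous_fst).inter
      (isOpen_lt continuous_fst continuous_const)).inter
      (hUbo.preimage (hqc.continuous.comp continuous_snd))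
  have hVsub : Set.Icc (0:ℝ) 1 ×ˢ Set.Icc (0 : Fin n → ℝ) 1 ⊆ (V₁ ∪ Vm) ∪ V₂ := by
    rintro ⟨s, t⟩ ⟨hs, ht⟩
    rcases lt_trichotomy s (1/2 : ℝ) with h | h | h
    · exact Or.inl (Or.inl ⟨h, hU₁s (hg₁mem (s, t))⟩)
    · exact Or.inl (Or.inr ⟨⟨by rw [h]; norm_num, by rw [h]; norm_num⟩, hUbs (hqcube t)⟩)
    · exact Or.inr ⟨h, hU₂s (hg₂mem (s, t))⟩
  have hKsm : ContMDiffOn 𝓘(ℝ, ℝ × (Fin n → ℝ)) IM (⊤ : ℕ∞) K ((V₁ ∪ Vm) ∪ V₂) := by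
    intro p hp
    apply ContMDiffAt.contMDiffWithinAt
    rcases hp with (hp | hp) | hp
    · have hopen : {p' : ℝ × (Fin n → ℝ) | p'.1 < 1/2} ∈ 𝓝 p :=
        (isOpen_lt continuous_fst continuous_const).mem_nhds hp.1
      have hev : K =ᶠ[𝓝 p] (K₁ ∘ g₁) :=
        Filter.eventuallyEq_of_mem hopen (fun x hx => hKe1 x (le_of_lt hx))
      have hsm : ContMDiffAt 𝓘(ℝ, ℝ × (Fin n → ℝ)) IM (⊤ : ℕ∞) (K₁ ∘ g₁) p :=
        ContMDiffAt.comp p (hU₁sm.contMDiffAt (hU₁o.mem_nhds hp.2))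
          (hg₁c.contMDiff.contMDiffAt)
      exact hsm.congr_of_eventuallyEq hev
    · have hopen : ({p' : ℝ × (Fin n → ℝ) | 3/8 < p'.1} ∩ {p' | p'.1 < 5/8}) ∈ 𝓝 p :=
        ((isOpen_lt continuous_const continuous_fst).inter
          (isOpen_lt continuous_fst continuous_const)).mem_nhds hp.1
      have hev : K =ᶠ[𝓝 p] (b.toFun ∘ fun p' : ℝ × (Fin n → ℝ) => q p'.2) :=
        Filter.eventuallyEq_of_mem hopen (fun x hx => hKmid x hx.1 hx.2)
      have hsm : ContMDiffAt 𝓘(ℝ, ℝ × (Fin n → ℝ)) IM (⊤ : ℕ∞)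
          (b.toFun ∘ fun p' : ℝ × (Fin n → ℝ) => q p'.2) p :=
        ContMDiffAt.comp p (hUbsm.contMDiffAt (hUbo.mem_nhds hp.2))
          ((hqc.comp contDiff_snd).contMDiff.contMDiffAt)
      exact hsm.congr_of_eventuallyEq hev
    · have hopen : {p' : ℝ × (Fin n → ℝ) | 1/2 < p'.1} ∈ 𝓝 p :=
        (isOpen_lt continuous_const continuous_fst).mem_nhds hp.1
      have hev : K =ᶠ[𝓝 p] (K₂ ∘ g₂) :=
        Filter.eventuallyEq_of_mem hopen (fun x hx => hKe2 x (not_le.2 hx))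
      have hsm : ContMDiffAt 𝓘(ℝ, ℝ × (Fin n → ℝ)) IM (⊤ : ℕ∞) (K₂ ∘ g₂) p :=
        ContMDiffAt.comp p (hU₂sm.contMDiffAt (hU₂o.mem_nhds hp.2))
          (hg₂c.contMDiff.contMDiffAt)
      exact hsm.congr_of_eventuallyEq hev
  have hKrank : ∀ p ∈ Set.Icc (0:ℝ) 1 ×ˢ Set.Icc (0 : Fin n → ℝ) 1,
      LinearMap.rank (mfderiv 𝓘(ℝ, ℝ × (Fin n → ℝ)) IM K p).toLinearMap ≤ (n : Cardinal) := by
    intro p hp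
    rcases le_or_gt p.1 (3/8 : ℝ) with h38 | h38
    · have hopen : {p' : ℝ × (Fin n → ℝ) | p'.1 < 1/2} ∈ 𝓝 p :=
        (isOpen_lt continuous_fst continuous_const).mem_nhds
          (show p ∈ {p' : ℝ × (Fin n → ℝ) | p'.1 < 1/2} from by
            simp only [Set.mem_setOf_eq]; linarith)
      have hev : K =ᶠ[𝓝 p] (K₁ ∘ g₁) :=
        Filter.eventuallyEq_of_mem hopen (fun x hx => hKe1 x (le_of_lt hx))
      rw [hev.mfderiv_eq]
      have hd1 : MDifferentiableAt 𝓘(ℝ, ℝ × (Fin n → ℝ)) IM K₁ (g₁ p) :=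
        (hU₁sm.contMDiffAt (hU₁o.mem_nhds (hU₁s (hg₁mem p)))).mdifferentiableAt (by simp)
      have hd2 : MDifferentiableAt 𝓘(ℝ, ℝ × (Fin n → ℝ)) 𝓘(ℝ, ℝ × (Fin n → ℝ)) g₁ p :=
        (hg₁c.contMDiff.contMDiffAt).mdifferentiableAt (by simp)
      rw [mfderiv_comp p hd1 hd2, ContinuousLinearMap.toLinearMap_comp]
      exact (LinearMap.rank_comp_le_left _ _).trans (h₁rank (g₁ p) (hg₁mem p))
    · rcases lt_or_ge p.1 (5/8 : ℝ) with h58 | h58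
      · have hopen : ({p' : ℝ × (Fin n → ℝ) | 3/8 < p'.1} ∩ {p' | p'.1 < 5/8}) ∈ 𝓝 p :=
          ((isOpen_lt continuous_const continuous_fst).inter
            (isOpen_lt continuous_fst continuous_const)).mem_nhds ⟨h38, h58⟩
        have hev : K =ᶠ[𝓝 p] (b.toFun ∘ fun p' : ℝ × (Fin n → ℝ) => q p'.2) :=
          Filter.eventuallyEq_of_mem hopen (fun x hx => hKmid x hx.1 hx.2)
        rw [hev.mfderiv_eq]
        have hd1 : MDifferentiableAt 𝓘(ℝ, Fin n → ℝ) IM b.toFun (q p.2) :=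
          (hUbsm.contMDiffAt (hUbo.mem_nhds (hUbs (hqcube p.2)))).mdifferentiableAt (by simp)
        have hd2 : MDifferentiableAt 𝓘(ℝ, ℝ × (Fin n → ℝ)) 𝓘(ℝ, Fin n → ℝ)
            (fun p' : ℝ × (Fin n → ℝ) => q p'.2) p :=
          (((hqc.comp contDiff_snd).contMDiff.contMDiffAt)).mdifferentiableAt (by simp)
        rw [mfderiv_comp p hd1 hd2, ContinuousLinearMap.toLinearMap_comp]
        exact auxRankSnd _ _
      · have hopen : {p' : ℝ × (Fin n → ℝ) | 1/2 < p'.1} ∈ 𝓝 p :=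
          (isOpen_lt continuous_const continuous_fst).mem_nhds
            (show p ∈ {p' : ℝ × (Fin n → ℝ) | 1/2 < p'.1} from by
              simp only [Set.mem_setOf_eq]; linarith)
        have hev : K =ᶠ[𝓝 p] (K₂ ∘ g₂) :=
          Filter.eventuallyEq_of_mem hopen (fun x hx => hKe2 x (not_le.2 hx))
        rw [hev.mfderiv_eq]
        have hd1 : MDifferentiableAt 𝓘(ℝ, ℝ × (Fin n → ℝ)) IM K₂ (g₂ p) :=
          (hU₂sm.contMDiffAt (hU₂o.mem_nhds (hU₂s (hg₂mem p)))).mdifferentiableAt (by simp)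
        have hd2 : MDifferentiableAt 𝓘(ℝ, ℝ × (Fin n → ℝ)) 𝓘(ℝ, ℝ × (Fin n → ℝ)) g₂ p :=
          (hg₂c.contMDiff.contMDiffAt).mdifferentiableAt (by simp)
        rw [mfderiv_comp p hd1 hd2, ContinuousLinearMap.toLinearMap_comp]
        exact (LinearMap.rank_comp_le_left _ _).trans (h₂rank (g₂ p) (hg₂mem p))
  refine ⟨K, δ, hδ0, ⟨(V₁ ∪ Vm) ∪ V₂, (hV₁o.union hVmo).union hV₂o, hVsub, hKsm⟩,
    ?_, ?_, ?_, hKrank⟩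
  · -- based
    rintro s hs t ht ⟨i, hi⟩
    by_cases h : s ≤ (1/2 : ℝ)
    · rw [hKe1 (s, t) h]
      refine h₁based (φ₁ s) (hφ₁mem s) (q t) (hqcube t) ⟨i, ?_⟩
      rcases hi with hi | hi
      · exact Or.inl (lt_of_le_of_lt (hγ_low (t i) hi) hδ1)
      · exact Or.inr (lt_of_lt_of_le (by linarith) (hγ_high (t i) hi))
    · rw [hKe2 (s, t) h]
      refine h₂based (φ₂ s) (hφ₂mem s) (q t) (hqcube t) ⟨i, ?_⟩
      rcases hi with hi | hi
      · exact Or.inl (lt_of_le_of_lt (hγ_low (t i) hi) hδ2)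
      · exact Or.inr (lt_of_lt_of_le (by linarith) (hγ_high (t i) hi))
  · -- start
    intro s hs t ht hlt
    rw [hKe1 (s, t) (by linarith : s ≤ 1/2)]
    have eg : g₁ (s, t) = ((0:ℝ), q t) := by
      show (φ₁ s, q t) = _
      rw [hφ₁0 s (by linarith)]
    rw [eg, h₁start 0 ⟨le_refl 0, zero_le_one⟩ (q t) (hqcube t) hε₁]
    by_cases hmid : ∀ i, δ ≤ t i ∧ t i ≤ 1 - δ
    · have hqt : q t = t := funext fun i => hγ_id (t i) (hmid i).1 (hmid i).2
      rw [hqt]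
    · push_neg at hmid
      obtain ⟨i, hi⟩ := hmid
      have hi' : t i < δ ∨ 1 - δ < t i := by
        rcases lt_or_ge (t i) δ with h | h
        · exact Or.inl h
        · exact Or.inr (hi h)
      have e1 : a.toFun (q t) = x₀ := by
        refine haP (q t) (hqcube t) ⟨i, ?_⟩
        rcases hi' with h | h
        · exact Or.inl (lt_of_le_of_lt (hγ_low (t i) h) hδa)
        · exact Or.inr (lt_of_lt_of_le (by linarith) (hγ_high (t i) h))
      have e2 : a.toFun t = x₀ := by
        refine haP t ht ⟨i, ?_⟩
        rcases hi' with h | h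
        · exact Or.inl (h.trans hδa)
        · exact Or.inr (by linarith)
      rw [e1, e2]
  · -- end
    intro s hs t ht hgt
    rw [hKe2 (s, t) (by push_neg; linarith : ¬ (s ≤ 1/2))]
    have eg : g₂ (s, t) = ((1:ℝ), q t) := by
      show (φ₂ s, q t) = _
      rw [hφ₂1 s (by linarith)]
    rw [eg, h₂end 1 ⟨zero_le_one, le_refl 1⟩ (q t) (hqcube t) (by linarith)]
    by_cases hmid : ∀ i, δ ≤ t i ∧ t i ≤ 1 - δ
    · have hqt : q t = t := funext fun i => hγ_id (t i) (hmid i).1 (hmid i).2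
      rw [hqt]
    · push_neg at hmid
      obtain ⟨i, hi⟩ := hmid
      have hi' : t i < δ ∨ 1 - δ < t i := by
        rcases lt_or_ge (t i) δ with h | h
        · exact Or.inl h
        · exact Or.inr (hi h)
      have e1 : c.toFun (q t) = x₀ := by
        refine hcP (q t) (hqcube t) ⟨i, ?_⟩
        rcases hi' with h | h
        · exact Or.inl (lt_of_le_of_lt (hγ_low (t i) h) hδc)
        · exact Or.inr (lt_of_lt_of_le (by linarith) (hγ_high (t i) h))
      have e2 : c.toFun t = x₀ := by
        refine hcP t ht ⟨i, ?_⟩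
        rcases hi' with h | h
        · exact Or.inl (h.trans hδc)
        · exact Or.inr (by linarith)
      rw [e1, e2]

end Aux

/-- Rank-`n` homotopy is reflexive, symmetric and transitive on the set of
smooth `n`-loops in `X` based at `x₀`. -/
theorem thinHomotopic_equivalence {E HM : Type*} [NormedAddCommGroup E] [NormedSpace ℝ E]
    [TopologicalSpace HM] (IM : ModelWithCorners ℝ E HM)
    (X : Type*) [TopologicalSpace X] [ChartedSpace HM X] [IsManifold IM (⊤ : ℕ∞) X]
    (n : ℕ) (hn : 1 ≤ n) (x₀ : X) :
    (∀ a : SmoothNLoop IM X n x₀, ThinHomotopic a a) ∧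
    (∀ a b : SmoothNLoop IM X n x₀, ThinHomotopic a b → ThinHomotopic b a) ∧
    (∀ a b c : SmoothNLoop IM X n x₀,
        ThinHomotopic a b → ThinHomotopic b c → ThinHomotopic a c) :=
  ⟨fun a => thin_refl a, fun a b h => thin_symm a b h,
    fun a b c h₁ h₂ => thin_trans a b c h₁ h₂⟩

end
end
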